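/- For every real κ with 1 < κ < 4, the five subsets of ℝ² forming the standard pyramidal disk packing have pairwise disjoint interiors; moreover d₁ intersects each of d_x, d₂, d₋₂ in exactly one point, d₂ intersects each of d_x, d₋₁ in exactly one point, d₋₂ intersects each of d_x, d₋₁ in exactly one point, and d₁ ∩ d₋₁ = ∅, d₂ ∩ d₋₂ = ∅, d_x ∩ d₋₁ = ∅. (Thus the sets form a disk packing in ℝ² with tangency pattern the square-pyramid graph ⊠.) -/

import Mathlib

noncomputable section

open Metric

/-- The half-plane `{(x,y) : y ≤ −1}`. -/
def dx : Set (EuclideanSpace ℝ (Fin 2)) := {p | p 1 ≤ -1}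

/-- The half-plane `{(x,y) : y ≥ 1}`. -/
def dm1 : Set (EuclideanSpace ℝ (Fin 2)) := {p | 1 ≤ p 1}

/-- The closed disk of radius `1/κ` centered at `(0, 1/κ − 1)`. -/
def d1 (κ : ℝ) : Set (EuclideanSpace ℝ (Fin 2)) :=
  closedBall (WithLp.toLp 2 ![0, 1 / κ - 1] : EuclideanSpace ℝ (Fin 2)) (1 / κ)

/-- The closed unit disk centered at `(2/√κ, 0)`. -/
def d2 (κ : ℝ) : Set (EuclideanSpace ℝ (Fin 2)) :=
  closedBall (WithLp.toLp 2 ![2 / Real.sqrt κ, 0] : EuclideanSpace ℝ (Fin 2)) 1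

/-- The closed unit disk centered at `(−2/√κ, 0)`. -/
def dm2 (κ : ℝ) : Set (EuclideanSpace ℝ (Fin 2)) :=
  closedBall (WithLp.toLp 2 ![-(2 / Real.sqrt κ), 0] : EuclideanSpace ℝ (Fin 2)) 1

/-- The five disks of the standard pyramidal disk packing, as a family. -/
def packing (κ : ℝ) : Fin 5 → Set (EuclideanSpace ℝ (Fin 2)) :=
  ![dx, d1 κ, d2 κ, dm1, dm2 κ]


/-- Points of the Euclidean plane. -/
def pt (a b : ℝ) : EuclideanSpace ℝ (Fin 2) := WithLp.toLp 2 ![a, b]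

@[simp] lemma pt_zero (a b : ℝ) : pt a b 0 = a := rfl
@[simp] lemma pt_one (a b : ℝ) : pt a b 1 = b := rfl

lemma pt_eq (a b : ℝ) : pt a b = WithLp.toLp 2 ![a, b] := rfl

lemma mem_cb_iff (p c : EuclideanSpace ℝ (Fin 2)) (r : ℝ) (hr : 0 ≤ r) :
    p ∈ closedBall c r ↔ (p 0 - c 0) ^ 2 + (p 1 - c 1) ^ 2 ≤ r ^ 2 := by
  simp only [mem_closedBall, EuclideanSpace.dist_eq, Fin.sum_univ_two, Real.dist_eq, sq_abs]
  rw [Real.sqrt_le_left hr]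

lemma mem_b_iff (p c : EuclideanSpace ℝ (Fin 2)) (r : ℝ) (hr : 0 < r) :
    p ∈ ball c r ↔ (p 0 - c 0) ^ 2 + (p 1 - c 1) ^ 2 < r ^ 2 := by
  simp only [mem_ball, EuclideanSpace.dist_eq, Fin.sum_univ_two, Real.dist_eq, sq_abs]
  rw [Real.sqrt_lt' hr]

lemma dist_pts (c c' : EuclideanSpace ℝ (Fin 2)) :
    dist c c' = Real.sqrt ((c 0 - c' 0) ^ 2 + (c 1 - c' 1) ^ 2) := by
  simp only [EuclideanSpace.dist_eq, Fin.sum_univ_two, Real.dist_eq, sq_abs]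

/-- Two externally tangent closed balls meet in exactly one point. -/
lemma tangent_unique {E : Type*} [NormedAddCommGroup E] [InnerProductSpace ℝ E]
    (c1 c2 : E) (r1 r2 : ℝ) (h1 : 0 < r1) (h2 : 0 < r2)
    (hd : dist c1 c2 = r1 + r2) :
    ∃! p, p ∈ closedBall c1 r1 ∧ p ∈ closedBall c2 r2 := by
  have hs : r1 + r2 ≠ 0 := by positivity
  have hcc : ‖c2 - c1‖ = r1 + r2 := by rw [← dist_eq_norm, dist_comm]; exact hd
  refine ⟨c1 + (r1 / (r1 + r2)) • (c2 - c1), ⟨?_, ?_⟩, ?_⟩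
  · rw [mem_closedBall, dist_eq_norm, add_sub_cancel_left, norm_smul,
      Real.norm_of_nonneg (by positivity), hcc]
    rw [div_mul_cancel₀ _ hs]
  · rw [mem_closedBall, dist_eq_norm]
    have he : c1 + (r1 / (r1 + r2)) • (c2 - c1) - c2 = (r1 / (r1 + r2) - 1) • (c2 - c1) := by
      module
    rw [he, norm_smul, hcc, Real.norm_eq_abs,
      show r1 / (r1 + r2) - 1 = -(r2 / (r1+r2)) by field_simp; ring, abs_neg,
      abs_of_nonneg (by positivity), div_mul_cancel₀ _ hs]
  · rintro q ⟨hq1, hq2⟩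
    rw [mem_closedBall] at hq1 hq2
    have htri : dist c1 c2 ≤ dist c1 q + dist q c2 := dist_triangle _ _ _
    rw [dist_comm c1 q] at htri
    have e1 : dist q c1 = r1 := by linarith
    have e2 : dist q c2 = r2 := by linarith
    have hx : ‖q - c1‖ = r1 := by rw [← dist_eq_norm]; exact e1
    have hy : ‖c2 - q‖ = r2 := by rw [← dist_eq_norm, dist_comm]; exact e2
    have hsum : ‖(q - c1) + (c2 - q)‖ = ‖q - c1‖ + ‖c2 - q‖ := by
      rw [hx, hy, show q - c1 + (c2 - q) = c2 - c1 by abel, hcc]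
    have hray : SameRay ℝ (q - c1) (c2 - q) := sameRay_iff_norm_add.mpr hsum
    obtain ⟨t, ht, hteq⟩ := hray.exists_pos_left
      (fun h => by rw [h, norm_zero] at hx; linarith)
      (fun h => by rw [h, norm_zero] at hy; linarith)
    have htn : t * r1 = r2 := by
      have := congrArg norm hteq
      rwa [norm_smul, Real.norm_of_nonneg ht.le, hx, hy] at this
    have hc2 : c2 = q + t • (q - c1) := by rw [hteq]; abel
    have key : (r1 + r2) • q = r2 • c1 + r1 • c2 := by
      rw [hc2, ← htn]; module
    calc q = (r1 + r2)⁻¹ • ((r1 + r2) • q) := by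
            rw [smul_smul, inv_mul_cancel₀ hs, one_smul]
      _ = (r1 + r2)⁻¹ • (r2 • c1 + r1 • c2) := by rw [key]
      _ = c1 + (r1 / (r1 + r2)) • (c2 - c1) := by
            match_scalars <;> field_simp <;> ring

/-- A ball of radius `r` centered at height `r - 1` is tangent to `{y ≤ -1}`. -/
lemma tangent_bot (a r : ℝ) (hr : 0 < r) :
    ∃! p : EuclideanSpace ℝ (Fin 2),
      p ∈ closedBall (pt a (r - 1)) r ∧ p 1 ≤ -1 := by
  refine ⟨pt a (-1), ⟨?_, ?_⟩, ?_⟩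
  · rw [mem_cb_iff _ _ _ hr.le]
    simp only [pt_zero, pt_one]
    exact le_of_eq (by ring)
  · norm_num
  · rintro q ⟨hq, hq1⟩
    rw [mem_cb_iff _ _ _ hr.le] at hq
    simp only [pt_zero, pt_one] at hq
    have h1 : q 1 = -1 := by
      have hge : -1 ≤ q 1 := by nlinarith [sq_nonneg (q 0 - a), sq_nonneg (q 1 - (r - 1) + r)]
      linarith
    have h0 : q 0 = a := by
      have h2 : (q 0 - a) ^ 2 = 0 := le_antisymm (by nlinarith) (sq_nonneg _)
      have := pow_eq_zero_iff (n := 2) (by norm_num) |>.mp h2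
      linarith [sub_eq_zero.mp this]
    refine PiLp.ext fun i => ?_
    fin_cases i <;> simp [pt, h0, h1]

/-- A ball of radius `r` centered at height `1 - r` is tangent to `{y ≥ 1}`. -/
lemma tangent_top (a r : ℝ) (hr : 0 < r) :
    ∃! p : EuclideanSpace ℝ (Fin 2),
      p ∈ closedBall (pt a (1 - r)) r ∧ 1 ≤ p 1 := by
  refine ⟨pt a 1, ⟨?_, ?_⟩, ?_⟩
  · rw [mem_cb_iff _ _ _ hr.le]
    simp only [pt_zero, pt_one]
    exact le_of_eq (by ring)
  · norm_num
  · rintro q ⟨hq, hq1⟩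
    rw [mem_cb_iff _ _ _ hr.le] at hq
    simp only [pt_zero, pt_one] at hq
    have h1 : q 1 = 1 := by
      have hle : q 1 ≤ 1 := by nlinarith [sq_nonneg (q 0 - a), sq_nonneg (q 1 - (1 - r) - r)]
      linarith
    have h0 : q 0 = a := by
      have h2 : (q 0 - a) ^ 2 = 0 := le_antisymm (by nlinarith) (sq_nonneg _)
      have := pow_eq_zero_iff (n := 2) (by norm_num) |>.mp h2
      linarith [sub_eq_zero.mp this]
    refine PiLp.ext fun i => ?_
    fin_cases i <;> simp [pt, h0, h1]

/-- For `1 < κ < 4`, the five sets of the standard pyramidal disk packing have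
pairwise disjoint interiors; `d₁` meets each of `d_x, d₂, d₋₂` in exactly one
point, `d₂` meets each of `d_x, d₋₁` in exactly one point, `d₋₂` meets each of
`d_x, d₋₁` in exactly one point, and `d₁ ∩ d₋₁ = ∅`, `d₂ ∩ d₋₂ = ∅`,
`d_x ∩ d₋₁ = ∅`: the sets form a disk packing with tangency graph `⊠`. -/
theorem pyramidal_disk_packing_in_plane (κ : ℝ) (hκ1 : 1 < κ) (hκ4 : κ < 4) :
    (Pairwise fun i j =>
      Disjoint (interior (packing κ i)) (interior (packing κ j))) ∧
    (∃! p, p ∈ d1 κ ∧ p ∈ dx) ∧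
    (∃! p, p ∈ d1 κ ∧ p ∈ d2 κ) ∧
    (∃! p, p ∈ d1 κ ∧ p ∈ dm2 κ) ∧
    (∃! p, p ∈ d2 κ ∧ p ∈ dx) ∧
    (∃! p, p ∈ d2 κ ∧ p ∈ dm1) ∧
    (∃! p, p ∈ dm2 κ ∧ p ∈ dx) ∧
    (∃! p, p ∈ dm2 κ ∧ p ∈ dm1) ∧
    d1 κ ∩ dm1 = ∅ ∧
    d2 κ ∩ dm2 κ = ∅ ∧
    dx ∩ dm1 = ∅ := by
  have hκ0 : (0:ℝ) < κ := by linarith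
  have hr1 : (0:ℝ) < 1 / κ := by positivity
  have hs0 : 0 < Real.sqrt κ := Real.sqrt_pos.mpr hκ0
  have hs2 : Real.sqrt κ ^ 2 = κ := Real.sq_sqrt hκ0.le
  have hslt : Real.sqrt κ < 2 := by
    nlinarith [hs2, hs0]
  have hκinv : 1 / κ < 1 := by rw [div_lt_one hκ0]; exact hκ1
  -- distance computations
  have h4κ : (2 / Real.sqrt κ) ^ 2 = 4 / κ := by
    rw [div_pow, hs2]; norm_num
  have hd12 : dist (pt 0 (1 / κ - 1)) (pt (2 / Real.sqrt κ) 0)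
      = 1 / κ + 1 := by
    rw [dist_pts]
    simp only [pt_zero, pt_one]
    rw [show (0 - 2 / Real.sqrt κ) ^ 2 + (1 / κ - 1 - 0) ^ 2 = (1 / κ + 1) ^ 2 by
      rw [show (0 - 2 / Real.sqrt κ) ^ 2 = (2 / Real.sqrt κ) ^ 2 by ring, h4κ]
      field_simp; ring]
    exact Real.sqrt_sq (by positivity)
  have hd1m2 : dist (pt 0 (1 / κ - 1)) (pt (-(2 / Real.sqrt κ)) 0)
      = 1 / κ + 1 := by
    rw [dist_pts]
    simp only [pt_zero, pt_one]
    rw [show (0 - -(2 / Real.sqrt κ)) ^ 2 + (1 / κ - 1 - 0) ^ 2 = (1 / κ + 1) ^ 2 by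
      rw [show (0 - -(2 / Real.sqrt κ)) ^ 2 = (2 / Real.sqrt κ) ^ 2 by ring, h4κ]
      field_simp; ring]
    exact Real.sqrt_sq (by positivity)
  have hd2m2 : dist (pt (2 / Real.sqrt κ) 0) (pt (-(2 / Real.sqrt κ)) 0)
      = 4 / Real.sqrt κ := by
    rw [dist_pts]
    simp only [pt_zero, pt_one]
    rw [show (2 / Real.sqrt κ - -(2 / Real.sqrt κ)) ^ 2 + ((0:ℝ) - 0) ^ 2
        = (4 / Real.sqrt κ) ^ 2 by ring]
    exact Real.sqrt_sq (by positivity)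
  have h2lt : (2:ℝ) < 4 / Real.sqrt κ := by
    rw [lt_div_iff₀ hs0]; linarith
  -- the three empty intersections
  have hE1 : d1 κ ∩ dm1 = ∅ := by
    rw [Set.eq_empty_iff_forall_notMem]
    rintro p ⟨hp1, hp2⟩
    rw [d1, mem_cb_iff _ _ _ hr1.le] at hp1
    simp only [PiLp.toLp_apply, Matrix.cons_val_zero, Matrix.cons_val_one, Matrix.head_cons] at hp1
    have hp2' : 1 ≤ p 1 := hp2
    nlinarith [sq_nonneg (p 0 - 0),
      mul_pos (show 0 < p 1 - (1/κ - 1) - 1/κ by linarith)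
        (show 0 < p 1 - (1/κ - 1) + 1/κ by linarith)]
  have hE2 : d2 κ ∩ dm2 κ = ∅ := by
    rw [← Set.disjoint_iff_inter_eq_empty, d2, dm2, ← pt_eq, ← pt_eq]
    exact closedBall_disjoint_closedBall (by rw [hd2m2]; linarith)
  have hE3 : dx ∩ dm1 = ∅ := by
    rw [Set.eq_empty_iff_forall_notMem]
    rintro p ⟨hp1, hp2⟩
    have h1 : p 1 ≤ -1 := hp1
    have h2 : 1 ≤ p 1 := hp2
    linarith
  -- strip bounds for open balls
  have hBot : ∀ (a b r : ℝ), 0 < r →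
      ∀ p ∈ ball (pt a b) r, b - r < p 1 ∧ p 1 < b + r := by
    intro a b r hr p hp
    rw [mem_b_iff _ _ _ hr] at hp
    simp only [pt_zero, pt_one] at hp
    constructor <;> nlinarith [sq_nonneg (p 0 - a), sq_nonneg (p 1 - b + r), sq_nonneg (p 1 - b - r)]
  -- interior disjointness facts
  have hIdx : interior dx ⊆ {p : EuclideanSpace ℝ (Fin 2) | p 1 ≤ -1} := interior_subset
  have hIdm1 : interior dm1 ⊆ {p : EuclideanSpace ℝ (Fin 2) | 1 ≤ p 1} := interior_subset
  have hid1 : interior (d1 κ) = ball (pt 0 (1 / κ - 1)) (1 / κ) :=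
    by rw [d1, ← pt_eq]; exact interior_closedBall _ hr1.ne'
  have hid2 : interior (d2 κ) = ball (pt (2 / Real.sqrt κ) 0) 1 := by
    rw [d2, ← pt_eq]; exact interior_closedBall _ one_ne_zero
  have hidm2 : interior (dm2 κ) = ball (pt (-(2 / Real.sqrt κ)) 0) 1 := by
    rw [dm2, ← pt_eq]; exact interior_closedBall _ one_ne_zero
  have D01 : Disjoint (interior dx) (interior (d1 κ)) := by
    rw [hid1, Set.disjoint_left]
    intro p hp hp'
    have h1 : p 1 ≤ -1 := hIdx hp
    have h2 := (hBot 0 (1/κ - 1) (1/κ) hr1 p hp').1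
    linarith
  have D02 : Disjoint (interior dx) (interior (d2 κ)) := by
    rw [hid2, Set.disjoint_left]
    intro p hp hp'
    have h1 : p 1 ≤ -1 := hIdx hp
    have h2 := (hBot (2 / Real.sqrt κ) 0 1 one_pos p hp').1
    linarith
  have D04 : Disjoint (interior dx) (interior (dm2 κ)) := by
    rw [hidm2, Set.disjoint_left]
    intro p hp hp'
    have h1 : p 1 ≤ -1 := hIdx hp
    have h2 := (hBot (-(2 / Real.sqrt κ)) 0 1 one_pos p hp').1
    linarith
  have D23 : Disjoint (interior (d2 κ)) (interior dm1) := by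
    rw [hid2, Set.disjoint_left]
    intro p hp hp'
    have h1 : 1 ≤ p 1 := hIdm1 hp'
    have h2 := (hBot (2 / Real.sqrt κ) 0 1 one_pos p hp).2
    linarith
  have D34 : Disjoint (interior dm1) (interior (dm2 κ)) := by
    rw [hidm2, Set.disjoint_right]
    intro p hp hp'
    have h1 : 1 ≤ p 1 := hIdm1 hp'
    have h2 := (hBot (-(2 / Real.sqrt κ)) 0 1 one_pos p hp).2
    linarith
  have D12 : Disjoint (interior (d1 κ)) (interior (d2 κ)) := by
    rw [hid1, hid2]
    exact ball_disjoint_ball (by rw [hd12])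
  have D14 : Disjoint (interior (d1 κ)) (interior (dm2 κ)) := by
    rw [hid1, hidm2]
    exact ball_disjoint_ball (by rw [hd1m2])
  have D03 : Disjoint (interior dx) (interior dm1) :=
    Set.disjoint_of_subset interior_subset interior_subset
      (Set.disjoint_iff_inter_eq_empty.mpr hE3)
  have D13 : Disjoint (interior (d1 κ)) (interior dm1) :=
    Set.disjoint_of_subset interior_subset interior_subset
      (Set.disjoint_iff_inter_eq_empty.mpr hE1)
  have D24 : Disjoint (interior (d2 κ)) (interior (dm2 κ)) :=
    Set.disjoint_of_subset interior_subset interior_subset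
      (Set.disjoint_iff_inter_eq_empty.mpr hE2)
  refine ⟨?_, ?_, ?_, ?_, ?_, ?_, ?_, ?_, hE1, hE2, hE3⟩
  · intro i j hij
    fin_cases i <;> fin_cases j
    · exact absurd rfl hij
    · exact D01
    · exact D02
    · exact D03
    · exact D04
    · exact D01.symm
    · exact absurd rfl hij
    · exact D12
    · exact D13
    · exact D14
    · exact D02.symm
    · exact D12.symm
    · exact absurd rfl hij
    · exact D23
    · exact D24
    · exact D03.symm
    · exact D13.symm
    · exact D23.symm
    · exact absurd rfl hij
    · exact D34
    · exact D04.symm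
    · exact D14.symm
    · exact D24.symm
    · exact D34.symm
    · exact absurd rfl hij
  · simpa [pt, d1, dx, Set.mem_setOf_eq] using tangent_bot 0 (1/κ) hr1
  · simpa [pt, d1, d2] using tangent_unique _ _ _ _ hr1 one_pos hd12
  · simpa [pt, d1, dm2] using tangent_unique _ _ _ _ hr1 one_pos hd1m2
  · simpa [pt, d2, dx, Set.mem_setOf_eq, show (1:ℝ) - 1 = 0 by norm_num]
      using tangent_bot (2 / Real.sqrt κ) 1 one_pos
  · simpa [pt, d2, dm1, Set.mem_setOf_eq, show (1:ℝ) - 1 = 0 by norm_num]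
      using tangent_top (2 / Real.sqrt κ) 1 one_pos
  · simpa [pt, dm2, dx, Set.mem_setOf_eq, show (1:ℝ) - 1 = 0 by norm_num]
      using tangent_bot (-(2 / Real.sqrt κ)) 1 one_pos
  · simpa [pt, dm2, dm1, Set.mem_setOf_eq, show (1:ℝ) - 1 = 0 by norm_num]
      using tangent_top (-(2 / Real.sqrt κ)) 1 one_pos
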